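/- Let T be the infinite binary tree with weight w(t) = (1+|t|)^{-β} where β ≥ 2, and let V* : ℓ₁(T) → ℓ₂(T,W) be the operator (V*μ)(t) = Σ_{u ⪰ t} μ(u). Then there exists a constant C₁ = C₁(β) > 0 such that for all integers k ≥ 2, e_k(V*) ≥ C₁ · (ln k)^{1-β/2} · k^{-1/2}. -/

import Mathlib

open scoped ENNReal

/-- A node of the infinite binary tree `T` is a finite binary string;
its level `|t|` is its length. -/
abbrev Node : Type := List Bool

/-- `μ` belongs to `ℓ₁(T)`, i.e. `Σ_t |μ(t)| < ∞`. -/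
def MemL1 (μ : Node → ℝ) : Prop := Summable fun t : Node => |μ t|

/-- The `ℓ₁(T)` norm `‖μ‖₁ = Σ_t |μ(t)|`. -/
noncomputable def l1Norm (μ : Node → ℝ) : ℝ := ∑' t : Node, |μ t|

/-- `(V*μ)(t) = Σ_{u ⪰ t} μ(u)`, the sum over all nodes `u` having `t` as a prefix
(including `u = t`). -/
noncomputable def Vstar (μ : Node → ℝ) (t : Node) : ℝ := ∑' u : {u : Node // t <+: u}, μ u.1

/-- The weight `w(t) = (1 + |t|)^{-β}`. -/
noncomputable def wgt (β : ℝ) (t : Node) : ℝ := ((1 : ℝ) + (t.length : ℝ)) ^ (-β)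

/-- The squared distance of `f, g` in the weighted space `ℓ₂(T,W)`,
`Σ_t w(t) (f(t) - g(t))²`, computed in `ℝ≥0∞`. -/
noncomputable def distSqW (β : ℝ) (f g : Node → ℝ) : ℝ≥0∞ :=
  ∑' t : Node, ENNReal.ofReal (wgt β t * (f t - g t) ^ 2)

set_option maxHeartbeats 1000000

namespace ELB

def bits (len x : ℕ) : Node := (List.range len).map x.testBit
@[simp] lemma bits_length (len x : ℕ) : (bits len x).length = len := by simp [bits]
lemma bits_inj {len x y : ℕ} (hx : x < 2 ^ len) (hy : y < 2 ^ len)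
    (h : bits len x = bits len y) : x = y := by
  apply Nat.eq_of_testBit_eq
  intro i
  by_cases hi : i < len
  · have h1 : (bits len x)[i]'(by simpa using hi) = (bits len y)[i]'(by simpa using hi) :=
      List.getElem_of_eq h _
    simpa [bits] using h1
  · have hle : len ≤ i := not_lt.mp hi
    have h2 : (2:ℕ) ^ len ≤ 2 ^ i := Nat.pow_le_pow_right (by norm_num) hle
    rw [Nat.testBit_eq_false_of_lt (lt_of_lt_of_le hx h2),
       Nat.testBit_eq_false_of_lt (lt_of_lt_of_le hy h2)]
lemma pref_eq {l₁ l₂ L : List Bool} (h₁ : l₁ <+: L) (h₂ : l₂ <+: L)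
    (h : l₁.length = l₂.length) : l₁ = l₂ :=
  (List.prefix_of_prefix_length_le h₁ h₂ h.le).eq_of_length h
lemma pref_append_left {l₁ l₂ : List Bool} (l : List Bool) (h : l₁ <+: l₂) :
    l ++ l₁ <+: l ++ l₂ := by
  obtain ⟨t, ht⟩ := h
  exact ⟨t, by rw [List.append_assoc, ht]⟩
lemma replicate_pref {j L : ℕ} (h : j ≤ L) :
    (List.replicate j false : Node) <+: List.replicate L false :=
  ⟨List.replicate (L - j) false, by rw [← List.replicate_add]; congr 1; omega⟩

/-- the node of `μ_c` sitting in the `i`-th subtree -/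
def leaf (a b L : ℕ) {m q : ℕ} (c : Fin m → Fin q) (i : Fin m) : Node :=
  bits a i.val ++ (bits b (c i).val ++ List.replicate L false)

/-- test node: prefix of `leaf` of length `a+b+(j+1)` -/
def snode (a b : ℕ) {m q : ℕ} (c : Fin m → Fin q) (i : Fin m) (j : ℕ) : Node :=
  bits a i.val ++ (bits b (c i).val ++ List.replicate (j+1) false)

@[simp] lemma leaf_length (a b L : ℕ) {m q : ℕ} (c : Fin m → Fin q) (i : Fin m) :
    (leaf a b L c i).length = a + b + L := by simp [leaf]; ring

@[simp] lemma snode_length (a b : ℕ) {m q : ℕ} (c : Fin m → Fin q) (i : Fin m) (j : ℕ) :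
    (snode a b c i j).length = a + b + (j+1) := by simp [snode]; ring

noncomputable def mu (a b L : ℕ) {m q : ℕ} (c : Fin m → Fin q) : Node → ℝ :=
  fun t => if t ∈ Finset.image (leaf a b L c) Finset.univ then (m : ℝ)⁻¹ else 0

lemma snode_prefix_leaf {a b L : ℕ} {m q : ℕ} (c : Fin m → Fin q) (i : Fin m) {j : ℕ}
    (hj : j + 1 ≤ L) : snode a b c i j <+: leaf a b L c i :=
  pref_append_left _ (pref_append_left _ (replicate_pref hj))

/-- if a test node of `c,i` is a prefix of a leaf of `c'`, that leaf is in subtree `i` -/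
lemma prefix_leaf_fst {a b L : ℕ} {m q : ℕ} (hm : m ≤ 2 ^ a)
    {c c' : Fin m → Fin q} {i i' : Fin m} {j : ℕ}
    (h : snode a b c i j <+: leaf a b L c' i') : i' = i := by
  have h1 : bits a i.val <+: leaf a b L c' i' :=
    (List.prefix_append _ _).trans h
  have h2 : bits a i'.val <+: leaf a b L c' i' := List.prefix_append _ _
  have heq : bits a i'.val = bits a i.val :=
    pref_eq h2 h1 (by simp)
  exact Fin.ext (bits_inj (lt_of_lt_of_le i'.isLt hm) (lt_of_lt_of_le i.isLt hm) heq)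

/-- ... and moreover the symbols agree -/
lemma prefix_leaf_snd {a b L : ℕ} {m q : ℕ} (hm : m ≤ 2 ^ a) (hq : q ≤ 2 ^ b)
    {c c' : Fin m → Fin q} {i : Fin m} {j : ℕ}
    (h : snode a b c i j <+: leaf a b L c' i) : c' i = c i := by
  have h1 : bits a i.val ++ bits b (c i).val <+: leaf a b L c' i := by
    refine List.IsPrefix.trans ?_ h
    rw [snode, ← List.append_assoc]
    exact List.prefix_append _ _
  have h2 : bits a i.val ++ bits b (c' i).val <+: leaf a b L c' i := by
    rw [leaf, ← List.append_assoc]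
    exact List.prefix_append _ _
  have heq := pref_eq h2 h1 (by simp)
  have := List.append_cancel_left heq
  exact Fin.ext (bits_inj (lt_of_lt_of_le (c' i).isLt hq) (lt_of_lt_of_le (c i).isLt hq) this)

lemma leaf_inj {a b L : ℕ} {m q : ℕ} (hm : m ≤ 2 ^ a) (c : Fin m → Fin q) :
    Function.Injective (leaf a b L c) := by
  intro i i' h
  have h1 : bits a i.val = bits a i'.val :=
    (List.append_inj h (by simp)).1
  exact Fin.ext (bits_inj (lt_of_lt_of_le i.isLt hm) (lt_of_lt_of_le i'.isLt hm) h1)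

lemma mu_memL1 {a b L : ℕ} {m q : ℕ} (c : Fin m → Fin q) : MemL1 (mu a b L c) := by
  apply summable_of_ne_finset_zero (s := Finset.image (leaf a b L c) Finset.univ)
  intro t ht
  simp [mu, ht]

lemma mu_l1Norm {a b L : ℕ} {m q : ℕ} (c : Fin m → Fin q) : l1Norm (mu a b L c) ≤ 1 := by
  rcases Nat.eq_zero_or_pos m with hm | hm
  · subst hm
    have : ∀ t, |mu a b L c t| = 0 := by
      intro t
      simp [mu]
    simp [l1Norm, this]
  rw [l1Norm, tsum_eq_sum (s := Finset.image (leaf a b L c) Finset.univ)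
      (by intro t ht; simp [mu, ht])]
  have hbound : ∀ t ∈ Finset.image (leaf a b L c) Finset.univ,
      |mu a b L c t| ≤ (m : ℝ)⁻¹ := by
    intro t ht
    simp only [mu, if_pos ht]
    rw [abs_of_nonneg (by positivity)]
  calc ∑ t ∈ Finset.image (leaf a b L c) Finset.univ, |mu a b L c t|
      ≤ ∑ _t ∈ Finset.image (leaf a b L c) Finset.univ, (m : ℝ)⁻¹ :=
        Finset.sum_le_sum hbound
    _ = (Finset.image (leaf a b L c) Finset.univ).card * (m : ℝ)⁻¹ := by
        rw [Finset.sum_const, nsmul_eq_mul]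
    _ ≤ m * (m : ℝ)⁻¹ := by
        have hc : (Finset.image (leaf a b L c) Finset.univ).card ≤ m := by
          refine (Finset.card_image_le).trans ?_
          simp
        have hc' : ((Finset.image (leaf a b L c) Finset.univ).card : ℝ) ≤ (m : ℝ) := by
          exact_mod_cast hc
        exact mul_le_mul_of_nonneg_right hc' (by positivity)
    _ = 1 := mul_inv_cancel₀ (by positivity)

lemma vstar_mu_eq {a b L : ℕ} {m q : ℕ} (hm : m ≤ 2 ^ a)
    (c : Fin m → Fin q) (i : Fin m) {j : ℕ} (hj : j + 1 ≤ L) :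
    Vstar (mu a b L c) (snode a b c i j) = (m : ℝ)⁻¹ := by
  rw [Vstar]
  rw [tsum_eq_single (⟨leaf a b L c i, snode_prefix_leaf c i hj⟩ :
      {u : Node // snode a b c i j <+: u})]
  · simp only [mu]
    rw [if_pos (Finset.mem_image_of_mem _ (Finset.mem_univ i))]
  · rintro ⟨u, hu⟩ hne
    simp only [mu]
    rw [if_neg]
    intro hmem
    obtain ⟨i', -, hi'⟩ := Finset.mem_image.mp hmem
    have : i' = i := prefix_leaf_fst hm (hi' ▸ hu)
    subst this
    exact hne (Subtype.ext hi'.symm)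

lemma vstar_mu_eq_zero {a b L : ℕ} {m q : ℕ} (hm : m ≤ 2 ^ a) (hq : q ≤ 2 ^ b)
    {c c' : Fin m → Fin q} {i : Fin m} (hne : c' i ≠ c i) (j : ℕ) :
    Vstar (mu a b L c') (snode a b c i j) = 0 := by
  rw [Vstar]
  have h0 : ∀ u : {u : Node // snode a b c i j <+: u}, mu a b L c' u.1 = 0 := by
    rintro ⟨u, hu⟩
    simp only [mu]
    rw [if_neg]
    intro hmem
    obtain ⟨i', -, hi'⟩ := Finset.mem_image.mp hmem
    have hfst : i' = i := prefix_leaf_fst hm (hi' ▸ hu)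
    subst hfst
    exact hne (prefix_leaf_snd hm hq (hi' ▸ hu))
  exact (tsum_congr h0).trans tsum_zero


/-- Hamming distance -/
def hdist {m q : ℕ} (c c' : Fin m → Fin q) : ℕ :=
  (Finset.univ.filter fun i => c i ≠ c' i).card

lemma card_ball_le {m q : ℕ} (hq : 1 ≤ q) (s : Fin m → Fin q) (e : ℕ) :
    (Finset.univ.filter fun x : Fin m → Fin q => hdist x s ≤ e).card ≤ 2 ^ m * q ^ e := by
  classical
  set P := ((Finset.univ : Finset (Fin m)).powerset.filter fun D => D.card ≤ e) with hP
  have hsub : (Finset.univ.filter fun x : Fin m → Fin q => hdist x s ≤ e) ⊆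
      P.biUnion fun D => Finset.univ.filter fun x : Fin m → Fin q => ∀ i ∉ D, x i = s i := by
    intro x hx
    rw [Finset.mem_filter] at hx
    refine Finset.mem_biUnion.mpr ⟨Finset.univ.filter fun i => x i ≠ s i, ?_, ?_⟩
    · rw [hP, Finset.mem_filter, Finset.mem_powerset]
      exact ⟨Finset.filter_subset _ _, hx.2⟩
    · rw [Finset.mem_filter]
      refine ⟨Finset.mem_univ _, fun i hi => ?_⟩
      rw [Finset.mem_filter] at hi
      push_neg at hi
      exact hi (Finset.mem_univ i)
  have hinner : ∀ D ∈ P,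
      (Finset.univ.filter fun x : Fin m → Fin q => ∀ i ∉ D, x i = s i).card ≤ q ^ e := by
    intro D hD
    rw [hP, Finset.mem_filter, Finset.mem_powerset] at hD
    have hinj : Set.InjOn (fun (x : Fin m → Fin q) => fun i : {i // i ∈ D} => x i.1)
        ↑(Finset.univ.filter fun x : Fin m → Fin q => ∀ i ∉ D, x i = s i) := by
      intro x hx y hy hxy
      simp only [Finset.coe_filter, Set.mem_setOf_eq] at hx hy
      funext i
      by_cases hi : i ∈ D
      · exact congrFun hxy ⟨i, hi⟩
      · rw [hx.2 i hi, hy.2 i hi]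
    calc (Finset.univ.filter fun x : Fin m → Fin q => ∀ i ∉ D, x i = s i).card
        ≤ (Finset.univ : Finset ({i // i ∈ D} → Fin q)).card :=
          Finset.card_le_card_of_injOn _ (fun _ _ => Finset.mem_univ _) hinj
      _ = q ^ D.card := by
          rw [Finset.card_univ, Fintype.card_fun, Fintype.card_fin, Fintype.card_coe]
      _ ≤ q ^ e := Nat.pow_le_pow_right hq hD.2
  calc (Finset.univ.filter fun x : Fin m → Fin q => hdist x s ≤ e).card
      ≤ (P.biUnion fun D =>
          Finset.univ.filter fun x : Fin m → Fin q => ∀ i ∉ D, x i = s i).card :=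
        Finset.card_le_card hsub
    _ ≤ ∑ D ∈ P, (Finset.univ.filter fun x : Fin m → Fin q => ∀ i ∉ D, x i = s i).card :=
        Finset.card_biUnion_le
    _ ≤ ∑ _D ∈ P, q ^ e := Finset.sum_le_sum hinner
    _ = P.card * q ^ e := by rw [Finset.sum_const, smul_eq_mul]
    _ ≤ 2 ^ m * q ^ e := by
        have : P.card ≤ 2 ^ m := by
          refine (Finset.card_filter_le _ _).trans ?_
          rw [Finset.card_powerset, Finset.card_univ, Fintype.card_fin]
        exact Nat.mul_le_mul_right _ this

lemma wgt_nonneg (β : ℝ) (t : Node) : 0 ≤ wgt β t := Real.rpow_nonneg (by positivity) _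

lemma distSqW_comm (β : ℝ) (f g : Node → ℝ) : distSqW β f g = distSqW β g f := by
  unfold distSqW
  exact tsum_congr fun t => by rw [show (f t - g t) ^ 2 = (g t - f t) ^ 2 by ring]

lemma distSqW_quad (β : ℝ) (f g h : Node → ℝ) :
    distSqW β f h ≤ 2 * distSqW β f g + 2 * distSqW β g h := by
  unfold distSqW
  rw [← ENNReal.tsum_mul_left, ← ENNReal.tsum_mul_left, ← ENNReal.tsum_add]
  refine ENNReal.tsum_le_tsum fun t => ?_
  have hw := wgt_nonneg β t
  have key : wgt β t * (f t - h t) ^ 2 ≤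
      2 * (wgt β t * (f t - g t) ^ 2) + 2 * (wgt β t * (g t - h t) ^ 2) := by
    nlinarith [sq_nonneg ((f t - g t) - (g t - h t)), sq_nonneg (f t - g t), sq_nonneg (g t - h t)]
  calc ENNReal.ofReal (wgt β t * (f t - h t) ^ 2)
      ≤ ENNReal.ofReal (2 * (wgt β t * (f t - g t) ^ 2) + 2 * (wgt β t * (g t - h t) ^ 2)) :=
        ENNReal.ofReal_le_ofReal key
    _ = ENNReal.ofReal (2 * (wgt β t * (f t - g t) ^ 2))
        + ENNReal.ofReal (2 * (wgt β t * (g t - h t) ^ 2)) := by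
        rw [ENNReal.ofReal_add (by positivity) (by positivity)]
    _ = 2 * ENNReal.ofReal (wgt β t * (f t - g t) ^ 2)
        + 2 * ENNReal.ofReal (wgt β t * (g t - h t) ^ 2) := by
        rw [ENNReal.ofReal_mul (by norm_num : (0:ℝ) ≤ 2),
          ENNReal.ofReal_mul (by norm_num : (0:ℝ) ≤ 2), ENNReal.ofReal_ofNat]



lemma distSq_lower (β : ℝ) (hβ : 0 ≤ β) {m q : ℕ} (a b L : ℕ)
    (hm : m ≤ 2 ^ a) (hq : q ≤ 2 ^ b) (c c' : Fin m → Fin q) :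
    ENNReal.ofReal (((hdist c c' * L : ℕ) : ℝ) *
        ((1 + ((a + b + L : ℕ) : ℝ)) ^ (-β) * ((m : ℝ)⁻¹) ^ 2)) ≤
      distSqW β (Vstar (mu a b L c)) (Vstar (mu a b L c')) := by
  classical
  set D := (Finset.univ.filter fun i => c i ≠ c' i) with hD
  set F := (D ×ˢ Finset.range L).image (fun p : Fin m × ℕ => snode a b c p.1 p.2) with hF
  have hinj : Set.InjOn (fun p : Fin m × ℕ => snode a b c p.1 p.2) ↑(D ×ˢ Finset.range L) := by
    intro p hp p' hp' heq
    have hlen := congrArg List.length heq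
    simp only [snode_length] at hlen
    have hj : p.2 = p'.2 := by omega
    have h1 : bits a p.1.val = bits a p'.1.val := by
      have heq' : bits a p.1.val ++ (bits b (c p.1).val ++ List.replicate (p.2+1) false)
          = bits a p'.1.val ++ (bits b (c p'.1).val ++ List.replicate (p'.2+1) false) := heq
      exact (List.append_inj heq' (by simp)).1
    have hi : p.1 = p'.1 :=
      Fin.ext (bits_inj (lt_of_lt_of_le p.1.isLt hm) (lt_of_lt_of_le p'.1.isLt hm) h1)
    exact Prod.ext hi hj
  have hcardF : F.card = hdist c c' * L := by
    rw [hF, Finset.card_image_of_injOn hinj, Finset.card_product, Finset.card_range, hdist, hD]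
  set z : ℝ := (1 + ((a + b + L : ℕ) : ℝ)) ^ (-β) * ((m : ℝ)⁻¹) ^ 2 with hz
  have hterm : ∀ t ∈ F, ENNReal.ofReal z ≤
      ENNReal.ofReal (wgt β t * (Vstar (mu a b L c) t - Vstar (mu a b L c') t) ^ 2) := by
    intro t ht
    obtain ⟨p, hp, rfl⟩ := Finset.mem_image.mp ht
    rw [Finset.mem_product] at hp
    obtain ⟨hp1, hp2⟩ := hp
    rw [Finset.mem_range] at hp2
    have hj1 : p.2 + 1 ≤ L := hp2
    have hne : c' p.1 ≠ c p.1 := by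
      have := (Finset.mem_filter.mp hp1).2
      exact this.symm
    rw [vstar_mu_eq hm c p.1 hj1, vstar_mu_eq_zero hm hq hne p.2]
    apply ENNReal.ofReal_le_ofReal
    rw [hz, sub_zero]
    apply mul_le_mul_of_nonneg_right _ (by positivity)
    rw [wgt, snode_length]
    apply Real.rpow_le_rpow_of_nonpos (by positivity) _ (by linarith)
    push_cast
    have : (p.2 : ℝ) + 1 ≤ (L : ℝ) := by exact_mod_cast hj1
    linarith
  calc ENNReal.ofReal (((hdist c c' * L : ℕ) : ℝ) * z)
      = (hdist c c' * L : ℕ) • ENNReal.ofReal z := by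
        rw [ENNReal.ofReal_mul (by positivity), ENNReal.ofReal_natCast, nsmul_eq_mul]
    _ = F.card • ENNReal.ofReal z := by rw [hcardF]
    _ ≤ ∑ t ∈ F, ENNReal.ofReal (wgt β t *
          (Vstar (mu a b L c) t - Vstar (mu a b L c') t) ^ 2) :=
        Finset.card_nsmul_le_sum F _ _ hterm
    _ ≤ distSqW β (Vstar (mu a b L c)) (Vstar (mu a b L c')) := ENNReal.sum_le_tsum F


lemma arith (β : ℝ) (hβ : 2 ≤ β) (k r e m : ℕ) (hk : 2 ≤ k) (hr1 : 1 ≤ r)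
    (h2rk : 2 ^ r ≤ k) (hk2r : k < 2 ^ (r + 1))
    (he : e = k / (r + 1) + 1) (hm2e : m = 2 * e) :
    4 * ((18:ℝ) ^ (-β) / 12 * Real.log k ^ (1 - β / 2) * (k : ℝ) ^ (-(1:ℝ) / 2)) ^ 2 ≤
      ((e : ℝ)) * (r : ℝ) * ((1 + (((r+2) + (r+3) + r : ℕ) : ℝ)) ^ (-β) * ((m : ℝ)⁻¹) ^ 2) := by
  have hk0 : (0:ℝ) < (k:ℝ) := by positivity
  have hk1 : (1:ℝ) < (k:ℝ) := by exact_mod_cast hk.trans_lt' one_lt_two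
  set lk := Real.log k with hlk
  have hlkpos : 0 < lk := Real.log_pos hk1
  have hlog2lk : Real.log 2 ≤ lk := Real.log_le_log (by norm_num) (by exact_mod_cast hk)
  have hlkhalf : 2⁻¹ ≤ lk := le_trans (by linarith [Real.log_two_gt_d9]) hlog2lk
  -- lk ≤ 2 r
  have hF1 : lk ≤ 2 * r := by
    have h1 : (k:ℝ) ≤ 2 ^ (r+1) := by exact_mod_cast hk2r.le
    have h2 : lk ≤ Real.log (2 ^ (r+1)) := Real.log_le_log hk0 h1
    rw [Real.log_pow] at h2
    have h3 : ((r:ℝ)+1) * Real.log 2 ≤ (r+1) * 1 := by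
      apply mul_le_mul_of_nonneg_left (le_of_lt (by linarith [Real.log_two_lt_d9]))
      positivity
    have hr1' : (1:ℝ) ≤ r := by exact_mod_cast hr1
    push_cast at h2
    nlinarith
  -- r ≤ 2 lk
  have hF2 : (r : ℝ) ≤ 2 * lk := by
    have h1 : (2:ℝ) ^ r ≤ k := by exact_mod_cast h2rk
    have h2 : Real.log (2 ^ r) ≤ lk := Real.log_le_log (by positivity) h1
    rw [Real.log_pow] at h2
    nlinarith [Real.log_two_gt_d9]
  -- m (r+1) ≤ 4 k  (natural numbers)
  have hmr : m * (r + 1) ≤ 4 * k := by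
    have hd : k / (r+1) * (r+1) ≤ k := Nat.div_mul_le_self _ _
    have hrk : r + 1 ≤ k := le_trans (Nat.lt_two_pow_self (n := r)) h2rk
    have hexp : m * (r+1) = 2 * (k / (r+1) * (r+1)) + 2 * (r+1) := by
      rw [hm2e, he]; ring
    linarith
  have hm0 : 0 < m := by rw [hm2e, he]; exact Nat.mul_pos (by norm_num) (Nat.succ_pos _)
  have hm0' : (0:ℝ) < (m:ℝ) := by exact_mod_cast hm0
  -- m * lk ≤ 8 k  (reals)
  have hmlk : (m:ℝ) * lk ≤ 8 * k := by
    have h1 : (m:ℝ) * (r+1) ≤ 4 * k := by exact_mod_cast hmr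
    have h2 : (m:ℝ) * lk ≤ (m:ℝ) * (2 * r) := by
      apply mul_le_mul_of_nonneg_left hF1 (by positivity)
    nlinarith
  set P : ℝ := (18:ℝ) ^ (-β) with hP
  set W : ℝ := lk ^ (-β) with hW
  have hP0 : 0 < P := Real.rpow_pos_of_pos (by norm_num) _
  have hP1 : P ≤ 1 := Real.rpow_le_one_of_one_le_of_nonpos (by norm_num) (by linarith)
  have hW0 : 0 < W := Real.rpow_pos_of_pos hlkpos _
  set X : ℝ := (1 + (((r+2) + (r+3) + r : ℕ) : ℝ)) ^ (-β) with hX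
  have hcastn : (1 + (((r+2) + (r+3) + r : ℕ) : ℝ)) = 3 * (r:ℝ) + 6 := by push_cast; ring
  have hn18 : (1 + (((r+2) + (r+3) + r : ℕ) : ℝ)) ≤ 18 * lk := by
    rw [hcastn]; nlinarith
  have hXPW : P * W ≤ X := by
    rw [hP, hW, hX, ← Real.mul_rpow (by norm_num) hlkpos.le]
    apply Real.rpow_le_rpow_of_nonpos (by rw [hcastn]; positivity) hn18 (by linarith)
  have hX0 : 0 < X := Real.rpow_pos_of_pos (by rw [hcastn]; positivity) _
  -- squared rpow identities
  have hsq1 : (lk ^ (1 - β / 2)) ^ 2 = lk ^ 2 * W := by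
    rw [sq, ← Real.rpow_add hlkpos]
    have h : (1 - β/2) + (1 - β/2) = 2 + (-β) := by ring
    rw [h, Real.rpow_add hlkpos, hW]
    norm_num [Real.rpow_two]
  have hsq2 : ((k:ℝ) ^ (-(1:ℝ)/2)) ^ 2 = (k:ℝ)⁻¹ := by
    rw [sq, ← Real.rpow_add hk0]
    rw [show (-(1:ℝ)/2) + (-(1:ℝ)/2) = -1 by norm_num, Real.rpow_neg_one]
  have hLHS : 4 * (P / 12 * lk ^ (1 - β / 2) * (k:ℝ) ^ (-(1:ℝ)/2)) ^ 2
      = P ^ 2 / 36 * (lk ^ 2 * W * (k:ℝ)⁻¹) := by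
    rw [mul_pow, mul_pow, hsq1, hsq2]
    ring
  have he2 : (e:ℝ) = (m:ℝ) / 2 := by
    rw [hm2e]; push_cast; ring
  have hRHS : (e:ℝ) * (r:ℝ) * (X * ((m:ℝ)⁻¹) ^ 2) = (r:ℝ) * (X * (1 / (2 * m))) := by
    rw [he2]; field_simp
  rw [hLHS, hRHS]
  have h1 : lk / (16 * k) ≤ 1 / (2 * m) := by
    rw [div_le_div_iff₀ (by positivity) (by positivity)]
    have hring : lk * (2 * (m:ℝ)) = 2 * ((m:ℝ) * lk) := by ring
    linarith
  have h2 : lk / 2 * (P * W * (lk / (16 * k))) ≤ (r:ℝ) * (X * (1 / (2 * m))) := by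
    have hr0 : (0:ℝ) ≤ r := by positivity
    apply mul_le_mul (by linarith) ?_ (by positivity) hr0
    apply mul_le_mul hXPW h1 (by positivity) hX0.le
  have h3 : lk / 2 * (P * W * (lk / (16 * k))) = P / 32 * (lk ^ 2 * W * (k:ℝ)⁻¹) := by
    field_simp; ring
  rw [h3] at h2
  refine le_trans ?_ h2
  apply mul_le_mul_of_nonneg_right ?_ (by positivity)
  nlinarith


end ELB

open ELB in
/-- Lower bound `e_k(V*) ≥ C₁ (ln k)^{1-β/2} k^{-1/2}` for `β ≥ 2`: there is `C₁ > 0`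
such that for every `k ≥ 2`, no family of `2^{k-1}` balls of radius smaller than
`C₁ (ln k)^{1-β/2} k^{-1/2}` can cover the image of the unit ball of `ℓ₁(T)` under `V*`;
equivalently, for every set of `2^{k-1}` prospective centers in `ℓ₂(T,W)` there is a
point of the image at distance at least `C₁ (ln k)^{1-β/2} k^{-1/2}` from all of them. -/
theorem entropy_lower_bound_large_beta (β : ℝ) (hβ : 2 ≤ β) :
    ∃ C : ℝ, 0 < C ∧ ∀ k : ℕ, 2 ≤ k →
      ∀ N : Finset (Node → ℝ), N.card ≤ 2 ^ (k - 1) →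
        ∃ μ : Node → ℝ, MemL1 μ ∧ l1Norm μ ≤ 1 ∧
          ∀ g ∈ N,
            ENNReal.ofReal ((C * Real.log k ^ (1 - β / 2) * (k : ℝ) ^ (-(1 : ℝ) / 2)) ^ 2) ≤
              distSqW β (Vstar μ) g := by
  classical
  refine ⟨(18:ℝ) ^ (-β) / 12, by positivity, ?_⟩
  intro k hk N hN
  set r := Nat.log 2 k with hrdef
  have hrpow : 2 ^ r ≤ k := Nat.pow_log_le_self 2 (by omega)
  have hk2r : k < 2 ^ (r + 1) := Nat.lt_pow_succ_log_self (by norm_num) k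
  have hr1 : 1 ≤ r := by
    rcases Nat.eq_zero_or_pos r with h0 | h; · rw [h0] at hk2r; norm_num at hk2r; omega
    exact h
  set d := k / (r + 1) with hddef
  set e := d + 1 with hedef
  set m := 2 * e with hmdef
  set q := 2 ^ (r + 3) with hqdef
  -- basic nat facts
  have hdm : (r + 1) * d + k % (r + 1) = k := Nat.div_add_mod k (r + 1)
  have hmod : k % (r + 1) < r + 1 := Nat.mod_lt _ (by omega)
  have h2d : 2 * d ≤ (r + 1) * d := Nat.mul_le_mul_right d (by omega)
  have hp1 : (2:ℕ) ^ (r + 2) = 2 * 2 ^ (r + 1) := by ring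
  have hp2 : (2:ℕ) ≤ 2 ^ (r + 1) := by
    calc (2:ℕ) = 2 ^ 1 := by norm_num
    _ ≤ 2 ^ (r+1) := Nat.pow_le_pow_right (by norm_num) (by omega)
  have hm2a : m ≤ 2 ^ (r + 2) := by
    have hsk : (r + 1) * d ≤ k := by omega
    omega
  have hm0 : 0 < m := by omega
  -- counting condition for the pigeonhole
  have hmain : 2 ^ (k - 1) * (2 ^ m * q ^ e) < q ^ m := by
    have hqe : q ^ e = 2 ^ ((r+3) * e) := by rw [hqdef, ← pow_mul]
    have hqm : q ^ m = 2 ^ ((r+3) * m) := by rw [hqdef, ← pow_mul]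
    rw [hqe, hqm, ← pow_add, ← pow_add]
    apply Nat.pow_lt_pow_right (by norm_num)
    have hbe : (r+3) * e = (r+1) * d + (r+1) + 2*d + 2 := by rw [hedef]; ring
    have hbm : (r+3) * m = 2 * ((r+3) * e) := by rw [hmdef]; ring
    omega
  -- the contradiction setup
  by_contra hcon
  push_neg at hcon
  choose gg hgmem hglt using fun c : Fin m → Fin q =>
    hcon (mu (r+2) (r+3) r c) (mu_memL1 c) (mu_l1Norm c)
  have hmaps : ∀ c ∈ (Finset.univ : Finset (Fin m → Fin q)), gg c ∈ N := fun c _ => hgmem c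
  have hcount : N.card * (2 ^ m * q ^ e) < (Finset.univ : Finset (Fin m → Fin q)).card := by
    rw [Finset.card_univ, Fintype.card_fun, Fintype.card_fin, Fintype.card_fin]
    exact lt_of_le_of_lt (Nat.mul_le_mul_right _ hN) hmain
  obtain ⟨g, hgN, hfib⟩ := Finset.exists_lt_card_fiber_of_mul_lt_card_of_maps_to hmaps hcount
  set S := Finset.univ.filter (fun c : Fin m → Fin q => gg c = g) with hSdef
  -- a pair of far-apart codewords mapped to the same center
  have hfar : ∃ c ∈ S, ∃ c' ∈ S, e + 1 ≤ hdist c c' := by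
    by_contra hno
    push_neg at hno
    have hSpos : 0 < S.card := lt_of_le_of_lt (Nat.zero_le _) hfib
    obtain ⟨c₀, hc₀⟩ := Finset.card_pos.mp hSpos
    have hsub : S ⊆ Finset.univ.filter (fun x : Fin m → Fin q => hdist x c₀ ≤ e) := by
      intro c hc
      rw [Finset.mem_filter]
      exact ⟨Finset.mem_univ _, Nat.lt_succ_iff.mp (hno c hc c₀ hc₀)⟩
    have hball := (Finset.card_le_card hsub).trans
      (card_ball_le (q := q) (by rw [hqdef]; exact Nat.one_le_two_pow) c₀ e)
    omega
  obtain ⟨c, hcS, c', hc'S, hdd⟩ := hfar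
  -- lower bound on the distance between the two images
  have hlow : ENNReal.ofReal
      (4 * ((18:ℝ) ^ (-β) / 12 * Real.log k ^ (1 - β / 2) * (k : ℝ) ^ (-(1:ℝ)/2)) ^ 2) ≤
      distSqW β (Vstar (mu (r+2) (r+3) r c)) (Vstar (mu (r+2) (r+3) r c')) := by
    refine le_trans (ENNReal.ofReal_le_ofReal ?_)
      (distSq_lower β (by linarith) (r+2) (r+3) r hm2a le_rfl c c')
    have harith := arith β hβ k r e m hk hr1 hrpow hk2r (by rw [hedef, hddef]) hmdef
    refine harith.trans ?_
    have hde : (e : ℝ) * (r : ℝ) ≤ ((hdist c c' * r : ℕ) : ℝ) := by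
      have h2 : e * r ≤ hdist c c' * r :=
        Nat.mul_le_mul_right r (le_trans (Nat.le_succ e) hdd)
      exact_mod_cast h2
    exact mul_le_mul_of_nonneg_right hde (by positivity)
  -- upper bound: both are close to the same center g
  have hclose : distSqW β (Vstar (mu (r+2) (r+3) r c)) (Vstar (mu (r+2) (r+3) r c')) <
      ENNReal.ofReal
      (4 * ((18:ℝ) ^ (-β) / 12 * Real.log k ^ (1 - β / 2) * (k : ℝ) ^ (-(1:ℝ)/2)) ^ 2) := by
    set E := ENNReal.ofReal
      (((18:ℝ) ^ (-β) / 12 * Real.log k ^ (1 - β / 2) * (k : ℝ) ^ (-(1:ℝ)/2)) ^ 2) with hEdef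
    have hgc : gg c = g := (Finset.mem_filter.mp hcS).2
    have hgc' : gg c' = g := (Finset.mem_filter.mp hc'S).2
    have hx : distSqW β (Vstar (mu (r+2) (r+3) r c)) g < E := by
      rw [← hgc]; exact hglt c
    have hy : distSqW β (Vstar (mu (r+2) (r+3) r c')) g < E := by
      rw [← hgc']; exact hglt c'
    have hquad := distSqW_quad β (Vstar (mu (r+2) (r+3) r c)) g
      (Vstar (mu (r+2) (r+3) r c'))
    have hy' : distSqW β g (Vstar (mu (r+2) (r+3) r c')) < E := by
      rw [distSqW_comm]; exact hy
    have hEtop : E ≠ ⊤ := ENNReal.ofReal_ne_top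
    have h2x : 2 * distSqW β (Vstar (mu (r+2) (r+3) r c)) g < 2 * E :=
      ENNReal.mul_lt_mul_right (by norm_num) (by norm_num) hx
    have h2y : 2 * distSqW β g (Vstar (mu (r+2) (r+3) r c')) < 2 * E :=
      ENNReal.mul_lt_mul_right (by norm_num) (by norm_num) hy'
    have hsum := ENNReal.add_lt_add h2x h2y
    have h4E : ENNReal.ofReal
        (4 * ((18:ℝ) ^ (-β) / 12 * Real.log k ^ (1 - β / 2) * (k : ℝ) ^ (-(1:ℝ)/2)) ^ 2)
        = 2 * E + 2 * E := by
      rw [hEdef, ENNReal.ofReal_mul (by norm_num : (0:ℝ) ≤ 4), ENNReal.ofReal_ofNat]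
      ring
    rw [h4E]
    exact lt_of_le_of_lt hquad hsum
  exact absurd (lt_of_le_of_lt hlow hclose) (lt_irrefl _)
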